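/- Let K be a field with a Hausdorff field topology τ and let I be a K-linearly independent set of derivations K → K whose common constant subfield ⋂_{d ∈ I} Cons(d) is τ-dense in K. For subsets I₁, I₂ ⊆ I, the topology τ_{I₂} refines τ_{I₁} if and only if I₁ ⊆ I₂. In particular τ_{I₁} and τ_{I₂} are incomparable if and only if I₁ and I₂ are incomparable under containment. -/

import Mathlib

open TopologicalSpace Polynomial
open Submodule Filter Topology

variable {K : Type*}

/-- The topology on `K` induced by the embedding `a ↦ (a, (d a)_{d ∈ I})` into `K × K^I`,
where `K × K^I` carries the product topology induced by `τ`. -/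
def derTop [Field K] (τ : TopologicalSpace K) (I : Set (Derivation ℤ K K)) :
    TopologicalSpace K :=
  @TopologicalSpace.induced K (K × (I → K)) (fun a => (a, fun d => d.1 a))
    (@instTopologicalSpaceProd K (I → K) τ (@Pi.topologicalSpace I (fun _ => K) fun _ => τ))

/-- `τ` is a (Hausdorff) field topology on `K`. -/
def IsFieldTopology [Field K] (τ : TopologicalSpace K) : Prop :=
  @T2Space K τ ∧ @IsTopologicalRing K τ _ ∧
    @ContinuousOn K K τ τ (fun x => x⁻¹) {0}ᶜ


lemma derTop_eq [Field K] (τ : TopologicalSpace K) (J : Set (Derivation ℤ K K)) :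
    derTop τ J = τ ⊓ ⨅ d : J, τ.induced ⇑d.1 := by
  unfold derTop
  rw [instTopologicalSpaceProd, Pi.topologicalSpace, induced_inf, induced_compose,
    induced_iInf]
  congr 1
  · exact induced_id
  · rw [induced_iInf]
    simp only [induced_compose]
    rfl


lemma span_top [Field K] {ι : Type*} [Fintype ι] (D : ι → Derivation ℤ K K)
    (hD : LinearIndependent K fun i => ⇑(D i)) :
    span K (Set.range fun a => fun i => D i a) = ⊤ := by
  classical
  by_contra hn
  obtain ⟨φ, hφ0, hφ⟩ := Submodule.exists_dual_map_eq_bot_of_lt_top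
    (lt_top_iff_ne_top.2 hn) inferInstance
  have hval : ∀ a : K, φ (fun i => D i a) = 0 := by
    intro a
    have : (fun i => D i a) ∈ span K (Set.range fun a => fun i => D i a) :=
      subset_span ⟨a, rfl⟩
    have := Submodule.mem_map_of_mem (f := φ) this
    rw [hφ] at this
    exact (Submodule.mem_bot K).mp this
  set lam : ι → K := fun i => φ (Pi.single i 1) with hlam
  have hsingle : ∀ (i : ι) (c : K), (Pi.single i c : ι → K) = c • (Pi.single i 1 : ι → K) := by
    intro i c
    ext j
    by_cases h : j = i <;> simp [Pi.single_apply, h]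
  have hexp : ∀ x : ι → K, φ x = ∑ i, x i * lam i := by
    intro x
    have hx : x = ∑ i, Pi.single i (x i) := (Finset.univ_sum_single x).symm
    have h3 : φ x = ∑ i, φ (Pi.single i (x i)) := by
      rw [← map_sum]; exact congrArg φ hx
    rw [h3]
    refine Finset.sum_congr rfl fun i _ => ?_
    rw [hsingle i (x i), map_smul, smul_eq_mul]
  have hz : ∀ i, lam i = 0 := by
    have := Fintype.linearIndependent_iff.mp hD lam ?_
    · exact this
    · funext a
      have h2 := hval a
      rw [hexp] at h2
      simpa [mul_comm] using h2
  apply hφ0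
  refine LinearMap.ext fun x => ?_
  rw [hexp]
  simp [hz]

lemma span_combo [Field K] {ι : Type*} [Fintype ι] (D : ι → Derivation ℤ K K)
    (hD : LinearIndependent K fun i => ⇑(D i)) (v : ι → K) :
    ∃ (m : ℕ) (c b : Fin m → K), ∀ i, ∑ j, c j * (D i) (b j) = v i := by
  have h : v ∈ span K (Set.range fun a => fun i => D i a) := by
    rw [span_top D hD]; trivial
  obtain ⟨m, c, g, hg⟩ := mem_span_set'.mp h
  choose b hb using fun j => (g j).2
  refine ⟨m, c, b, fun i => ?_⟩
  have h2 := congrFun hg i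
  simp only [Finset.sum_apply, Pi.smul_apply, smul_eq_mul] at h2
  rw [← h2]
  refine Finset.sum_congr rfl fun j _ => ?_
  congr 1
  exact congrFun (hb j) i

lemma derTop_hard [Field K] (τ : TopologicalSpace K) (hτ : IsFieldTopology τ)
    (I : Set (Derivation ℤ K K))
    (hli : LinearIndependent K fun d : I => ⇑(d : Derivation ℤ K K))
    (hdense : @Dense K τ {a : K | ∀ d ∈ I, d a = 0})
    (I₁ I₂ : Set (Derivation ℤ K K)) (h₁ : I₁ ⊆ I) (h₂ : I₂ ⊆ I)
    (hle : derTop τ I₂ ≤ derTop τ I₁) : I₁ ⊆ I₂ := by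
  classical
  intro d₀ hd₀
  by_contra hd₀2
  letI := τ
  haveI : T2Space K := hτ.1
  haveI : IsTopologicalRing K := hτ.2.1
  -- d₀ is continuous wrt derTop τ I₂
  have hcont : derTop τ I₂ ≤ τ.induced ⇑d₀ := by
    refine hle.trans ?_
    rw [derTop_eq]
    exact inf_le_right.trans (iInf_le (fun d : I₁ => τ.induced ⇑d.1) ⟨d₀, hd₀⟩)
  have ht : Filter.Tendsto ⇑d₀ (@nhds K (derTop τ I₂) 0) (𝓝 (0:K)) := by
    have hc : @Continuous K K (derTop τ I₂) τ ⇑d₀ :=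
      continuous_iff_le_induced.mpr hcont
    have h2 := @Continuous.tendsto K K (derTop τ I₂) τ _ hc 0
    rwa [map_zero] at h2
  have hnhds : @nhds K (derTop τ I₂) 0
      = 𝓝 0 ⊓ ⨅ d : I₂, Filter.comap ⇑d.1 (𝓝 0) := by
    rw [derTop_eq, _root_.nhds_inf, _root_.nhds_iInf]
    congr 1
    refine iInf_congr fun d => ?_
    rw [nhds_induced, map_zero]
  obtain ⟨V, W, hVopen, hWopen, h0V, h1W, hVW⟩ := t2_separation (zero_ne_one (α := K))
  have hpre : ⇑d₀ ⁻¹' V ∈ 𝓝 (0:K) ⊓ ⨅ d : I₂, Filter.comap ⇑d.1 (𝓝 0) := by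
    rw [← hnhds]
    exact ht (hVopen.mem_nhds h0V)
  rw [Filter.mem_inf_iff] at hpre
  obtain ⟨U, hU, T, hT, hUT⟩ := hpre
  rw [Filter.mem_iInf] at hT
  obtain ⟨Js, hJsfin, Vs, hVs, rfl⟩ := hT
  haveI := hJsfin.fintype
  choose Us hUs hUsub using fun i : Js => Filter.mem_comap.mp (hVs i)
  -- key consequence of continuity
  have hkey : ∀ a : K, a ∈ U → (∀ i : Js, (i.1.1 : Derivation ℤ K K) a ∈ Us i) →
      d₀ a ∈ V := by
    intro a haU hai
    have : a ∈ ⇑d₀ ⁻¹' V := by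
      rw [hUT]
      exact ⟨haU, Set.mem_iInter.mpr fun i => hUsub i (hai i)⟩
    exact this
  -- linear independence of the finite family d₀ plus Js
  set f : Option Js → I := fun o => o.elim ⟨d₀, h₁ hd₀⟩ (fun i => ⟨i.1.1, h₂ i.1.2⟩) with hf
  have hfinj : Function.Injective f := by
    rintro (_|i) (_|j) h <;> simp only [hf, Option.elim, Subtype.mk.injEq] at h
    · rfl
    · exact absurd (by rw [h]; exact j.1.2) hd₀2
    · exact absurd (by rw [← h]; exact i.1.2) hd₀2
    · exact congrArg some (Subtype.ext (Subtype.ext h))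
  set D : Option Js → Derivation ℤ K K := fun o => (f o).1 with hD
  have hDli : LinearIndependent K fun o => ⇑(D o) := hli.comp f hfinj
  obtain ⟨m, c, b, hcb⟩ := span_combo D hDli (fun o => o.elim 1 (fun _ => 0))
  have hnone : ∑ j, c j * d₀ (b j) = 1 := hcb none
  have hsome : ∀ i : Js, ∑ j, c j * (i.1.1 : Derivation ℤ K K) (b j) = 0 :=
    fun i => hcb (some i)
  -- continuous auxiliary maps on (Fin m → K) × K
  set θ : (Fin m → K) × K → K := fun p => (∑ j, p.1 j * b j) - p.2 with hθ
  have hθc : Continuous θ := by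
    apply Continuous.sub
    · exact continuous_finset_sum _ fun j _ =>
        ((continuous_apply j).comp continuous_fst).mul continuous_const
    · exact continuous_snd
  have hψc : ∀ d : Derivation ℤ K K,
      Continuous (fun p : (Fin m → K) × K => ∑ j, p.1 j * d (b j)) := fun d =>
    continuous_finset_sum _ fun j _ =>
      ((continuous_apply j).comp continuous_fst).mul continuous_const
  set p₀ : (Fin m → K) × K := (c, ∑ j, c j * b j) with hp₀
  -- the neighborhood of p₀
  have hΩ : θ ⁻¹' U ∩ (fun p : (Fin m → K) × K => ∑ j, p.1 j * d₀ (b j)) ⁻¹' W ∩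
      ⋂ i : Js, (fun p : (Fin m → K) × K => ∑ j, p.1 j * (i.1.1 : Derivation ℤ K K) (b j)) ⁻¹' Us i
      ∈ 𝓝 p₀ := by
    refine Filter.inter_mem (Filter.inter_mem ?_ ?_) ?_
    · apply hθc.continuousAt.preimage_mem_nhds
      have : θ p₀ = 0 := by simp [hθ, hp₀]
      rw [this]
      exact hU
    · apply (hψc d₀).continuousAt.preimage_mem_nhds
      have : (∑ j, p₀.1 j * d₀ (b j)) = 1 := hnone
      rw [this]
      exact hWopen.mem_nhds h1W
    · refine Filter.iInter_mem.mpr fun i => ?_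
      apply (hψc _).continuousAt.preimage_mem_nhds
      have : (∑ j, p₀.1 j * (i.1.1 : Derivation ℤ K K) (b j)) = 0 := hsome i
      rw [this]
      exact hUs i
  -- density of constants
  set C : Set K := {a : K | ∀ d ∈ I, d a = 0} with hC
  have hdense2 : Dense ((Set.univ.pi fun _ : Fin m => C) ×ˢ C) :=
    (dense_pi Set.univ fun i _ => hdense).prod hdense
  obtain ⟨p, hpΩ, hpC⟩ := mem_closure_iff_nhds.mp (hdense2 p₀) _ hΩ
  obtain ⟨⟨hpU, hpW⟩, hpUs⟩ := hpΩ
  have hγC : ∀ j, p.1 j ∈ C := fun j => hpC.1 j (Set.mem_univ j)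
  have hγ₀C : p.2 ∈ C := hpC.2
  -- the witness element
  set a : K := θ p with ha
  have hda : ∀ d : Derivation ℤ K K, d ∈ I → d a = ∑ j, p.1 j * d (b j) := by
    intro d hd
    rw [ha, hθ]
    simp only [map_sub, map_sum]
    rw [hγ₀C d hd, sub_zero]
    refine Finset.sum_congr rfl fun j _ => ?_
    rw [Derivation.leibniz, hγC j d hd, smul_eq_mul, smul_eq_mul, mul_zero, add_zero]
  have hdV : d₀ a ∈ V := by
    apply hkey a hpU
    intro i
    rw [hda _ (h₂ i.1.2)]
    exact Set.mem_iInter.mp hpUs i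
  have hdW : d₀ a ∈ W := by
    rw [hda d₀ (h₁ hd₀)]
    exact hpW
  exact hVW.le_bot ⟨hdV, hdW⟩

theorem stmt7 [Field K] (τ : TopologicalSpace K) (hτ : IsFieldTopology τ)
    (I : Set (Derivation ℤ K K))
    (hli : LinearIndependent K fun d : I => ⇑(d : Derivation ℤ K K))
    (hdense : @Dense K τ {a : K | ∀ d ∈ I, d a = 0})
    (I₁ I₂ : Set (Derivation ℤ K K)) (h₁ : I₁ ⊆ I) (h₂ : I₂ ⊆ I) :
    (derTop τ I₂ ≤ derTop τ I₁ ↔ I₁ ⊆ I₂) ∧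
      ((¬ derTop τ I₂ ≤ derTop τ I₁ ∧ ¬ derTop τ I₁ ≤ derTop τ I₂) ↔
        (¬ I₁ ⊆ I₂ ∧ ¬ I₂ ⊆ I₁)) := by
  have key : ∀ J₁ J₂ : Set (Derivation ℤ K K), J₁ ⊆ I → J₂ ⊆ I →
      (derTop τ J₂ ≤ derTop τ J₁ ↔ J₁ ⊆ J₂) := by
    intro J₁ J₂ hJ₁ hJ₂
    constructor
    · exact derTop_hard τ hτ I hli hdense J₁ J₂ hJ₁ hJ₂
    · intro hsub
      rw [derTop_eq, derTop_eq]
      refine inf_le_inf_left τ ?_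
      exact le_iInf fun d => iInf_le_of_le ⟨d.1, hsub d.2⟩ le_rfl
  exact ⟨key I₁ I₂ h₁ h₂, by rw [key I₁ I₂ h₁ h₂, key I₂ I₁ h₂ h₁]⟩
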